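/- There exist points A, B, C, D in the Euclidean plane with dist A D = 4√2, dist A B = √2, dist B C = 3 + √5, dist C D = 3 − √5, such that: (i) the inner product ⟪B − A, D − A⟫ = 0 (the angle at A is 90°, with B ≠ A and D ≠ A); (ii) AD is the longest side, i.e. dist A B ≤ dist A D, dist B C ≤ dist A D, and dist C D ≤ dist A D; (iii) writing a = dist A B, b = dist B C, c = dist C D, d = dist A D, the relation d² = a² + b² + c² + 2abc/d holds; and yet (iv) B does not lie on the circle with diameter AD, i.e. dist B (midpoint A D) ≠ (dist A D)/2. Hence the relation d² = a² + b² + c² + 2abc/d for a quadrilateral with longest side d does not imply that the quadrilateral is inscribed in the semicircle with that side as diameter. -/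

import Mathlib

noncomputable def P (a b : ℝ) : EuclideanSpace ℝ (Fin 2) := (WithLp.equiv 2 (Fin 2 → ℝ)).symm ![a, b]

lemma distP (a b c d : ℝ) : dist (P a b) (P c d) = Real.sqrt ((a-c)^2+(b-d)^2) := by
  rw [EuclideanSpace.dist_eq]
  simp [P, Fin.sum_univ_two, Real.dist_eq, sq_abs]

lemma innerP (a b c d e f : ℝ) :
    (inner ℝ (P a b - P c d) (P e f - P c d) : ℝ) = (a-c)*(e-c)+(b-d)*(f-d) := by
  simp [P, PiLp.inner_apply, Fin.sum_univ_two]; ring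

lemma midP (a b c d : ℝ) : midpoint ℝ (P a b) (P c d) = P ((a+c)/2) ((b+d)/2) := by
  simp [P, midpoint_eq_smul_add]
  ext i
  fin_cases i <;> simp [WithLp.equiv_symm_apply, PiLp.toLp_apply] <;> ring

theorem quadrilateral_reciprocal_fails :
    ∃ A B C D : EuclideanSpace ℝ (Fin 2),
      dist A D = 4 * Real.sqrt 2 ∧
      dist A B = Real.sqrt 2 ∧
      dist B C = 3 + Real.sqrt 5 ∧
      dist C D = 3 - Real.sqrt 5 ∧
      B ≠ A ∧ D ≠ A ∧
      (inner ℝ (B - A) (D - A) : ℝ) = 0 ∧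
      dist A B ≤ dist A D ∧ dist B C ≤ dist A D ∧ dist C D ≤ dist A D ∧
      (dist A D) ^ 2 =
        (dist A B) ^ 2 + (dist B C) ^ 2 + (dist C D) ^ 2 +
          2 * (dist A B) * (dist B C) * (dist C D) / dist A D ∧
      dist B (midpoint ℝ A D) ≠ dist A D / 2 := by
  set s2 := Real.sqrt 2 with hs2def
  set s5 := Real.sqrt 5 with hs5def
  set s14 := Real.sqrt 14 with hs14def
  have h2 : s2 ^ 2 = 2 := Real.sq_sqrt (by norm_num)
  have h5 : s5 ^ 2 = 5 := Real.sq_sqrt (by norm_num)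
  have h14 : s14 ^ 2 = 14 := Real.sq_sqrt (by norm_num)
  have h2pos : 0 < s2 := Real.sqrt_pos.mpr (by norm_num)
  have h5pos : 0 < s5 := Real.sqrt_pos.mpr (by norm_num)
  have h5lt : s5 < 3 := by nlinarith
  have h2lt : s2 < 3/2 := by nlinarith
  refine ⟨P 0 0, P 0 s2, P ((68*s2 + 24*s2*s5 + s14)/34) ((17*s2 - 6*s2*s5 + 4*s14)/34),
    P (4*s2) 0, ?_, ?_, ?_, ?_, ?_, ?_, ?_, ?_, ?_, ?_, ?_, ?_⟩
  case refine_1 =>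
    rw [distP, show (0 - 4*s2)^2 + ((0:ℝ)-0)^2 = (4*s2)^2 by ring,
      Real.sqrt_sq (by positivity)]
  case refine_2 =>
    rw [distP, show ((0:ℝ) - 0)^2 + (0-s2)^2 = s2^2 by ring, Real.sqrt_sq h2pos.le]
  case refine_3 =>
    rw [distP, show (0 - (68*s2 + 24*s2*s5 + s14)/34)^2 + (s2 - (17*s2 - 6*s2*s5 + 4*s14)/34)^2
        = (3 + s5)^2 by linear_combination (17/4 + 3*s5 + 9/17*s5^2) * h2 + (1/17) * h5 + (1/68) * h14,
      Real.sqrt_sq (by positivity)]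
  case refine_4 =>
    rw [distP, show ((68*s2 + 24*s2*s5 + s14)/34 - 4*s2)^2 + ((17*s2 - 6*s2*s5 + 4*s14)/34 - 0)^2
        = (3 - s5)^2 by linear_combination (17/4 - 3*s5 + 9/17*s5^2) * h2 + (1/17) * h5 + (1/68) * h14,
      Real.sqrt_sq (by linarith)]
  case refine_5 =>
    intro h
    have := congrArg (fun p : EuclideanSpace ℝ (Fin 2) => p 1) h
    simp [P, WithLp.equiv_symm_apply, PiLp.toLp_apply] at this
    exact h2pos.ne' this
  case refine_6 =>
    intro h
    have := congrArg (fun p : EuclideanSpace ℝ (Fin 2) => p 0) h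
    simp [P, WithLp.equiv_symm_apply, PiLp.toLp_apply] at this
    nlinarith
  case refine_7 =>
    rw [innerP]; ring
  case refine_8 =>
    rw [distP, distP, show (0 - 4*s2)^2 + ((0:ℝ)-0)^2 = (4*s2)^2 by ring,
      show ((0:ℝ) - 0)^2 + (0-s2)^2 = s2^2 by ring,
      Real.sqrt_sq h2pos.le, Real.sqrt_sq (by positivity)]
    nlinarith
  case refine_9 =>
    rw [distP, distP, show (0 - 4*s2)^2 + ((0:ℝ)-0)^2 = (4*s2)^2 by ring,
      show (0 - (68*s2 + 24*s2*s5 + s14)/34)^2 + (s2 - (17*s2 - 6*s2*s5 + 4*s14)/34)^2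
        = (3 + s5)^2 by linear_combination (17/4 + 3*s5 + 9/17*s5^2) * h2 + (1/17) * h5 + (1/68) * h14,
      Real.sqrt_sq (by positivity), Real.sqrt_sq (by positivity)]
    nlinarith
  case refine_10 =>
    rw [distP, distP, show (0 - 4*s2)^2 + ((0:ℝ)-0)^2 = (4*s2)^2 by ring,
      show ((68*s2 + 24*s2*s5 + s14)/34 - 4*s2)^2 + ((17*s2 - 6*s2*s5 + 4*s14)/34 - 0)^2
        = (3 - s5)^2 by linear_combination (17/4 - 3*s5 + 9/17*s5^2) * h2 + (1/17) * h5 + (1/68) * h14,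
      Real.sqrt_sq (show (0:ℝ) ≤ 3 - s5 by linarith), Real.sqrt_sq (by positivity)]
    nlinarith
  case refine_11 =>
    rw [distP, distP, distP, distP,
      show (0 - 4*s2)^2 + ((0:ℝ)-0)^2 = (4*s2)^2 by ring,
      show ((0:ℝ) - 0)^2 + (0-s2)^2 = s2^2 by ring,
      show (0 - (68*s2 + 24*s2*s5 + s14)/34)^2 + (s2 - (17*s2 - 6*s2*s5 + 4*s14)/34)^2
        = (3 + s5)^2 by linear_combination (17/4 + 3*s5 + 9/17*s5^2) * h2 + (1/17) * h5 + (1/68) * h14,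
      show ((68*s2 + 24*s2*s5 + s14)/34 - 4*s2)^2 + ((17*s2 - 6*s2*s5 + 4*s14)/34 - 0)^2
        = (3 - s5)^2 by linear_combination (17/4 - 3*s5 + 9/17*s5^2) * h2 + (1/17) * h5 + (1/68) * h14,
      Real.sqrt_sq (by positivity), Real.sqrt_sq h2pos.le,
      Real.sqrt_sq (by positivity), Real.sqrt_sq (by linarith)]
    rw [show 2*s2*(3+s5)*(3-s5)/(4*s2) = 2 from by
      rw [div_eq_iff (by positivity)]; nlinarith]
    nlinarith
  case refine_12 =>
    rw [midP, distP, distP,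
      show (0 - 4*s2)^2 + ((0:ℝ)-0)^2 = (4*s2)^2 by ring,
      Real.sqrt_sq (by positivity)]
    intro h
    have h' := congrArg (fun x : ℝ => x ^ 2) h
    rw [Real.sq_sqrt (by positivity)] at h'
    nlinarith
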